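/- The Fourier-Dedekind sum is a real rational number: for all positive integers n, a_1,…,a_d and b > 1 with gcd(a_i,b) = 1 for each i, the complex number s_n(a_1,…,a_d;b) = (1/b)·Σ_{k=1}^{b−1} ξ_b^{kn} / ∏_{i=1}^d (1 − ξ_b^{k a_i}) lies in ℚ. -/

import Mathlib

open Complex Finset

/-- The primitive b-th root of unity. -/
noncomputable def xi (b : ℕ) : ℂ := Complex.exp (2 * Real.pi * Complex.I / b)

/-- The Fourier-Dedekind sum is a rational number. -/
theorem stmt_5 (d b n : ℕ) (hb : 1 < b) (hn : 0 < n) (a : Fin d → ℕ)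
    (hapos : ∀ i, 0 < a i) (hcop : ∀ i, Nat.Coprime (a i) b) :
    ∃ q : ℚ,
      (1 / b : ℂ) * ∑ k ∈ Finset.Ico 1 b,
        xi b ^ (k * n) / ∏ i, (1 - xi b ^ (k * a i)) = (q : ℂ) := by
  have hb0 : b ≠ 0 := by omega
  haveI : NeZero b := ⟨hb0⟩
  have hζ : IsPrimitiveRoot (xi b) b := Complex.isPrimitiveRoot_exp b hb0
  set F := IntermediateField.adjoin ℚ ({xi b} : Set ℂ) with hFdef
  let ζK : F := IntermediateField.AdjoinSimple.gen ℚ (xi b)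
  have hζK : IsPrimitiveRoot ζK b := by
    rwa [← IsPrimitiveRoot.coe_submonoidClass_iff (B := IntermediateField ℚ ℂ)]
  have hint : IsIntegral ℚ (xi b) := ⟨Polynomial.X ^ b - 1, Polynomial.monic_X_pow_sub_C _ hb0, by
    simp [hζ.pow_eq_one, sub_eq_zero]⟩
  let bp : ℕ+ := ⟨b, by omega⟩
  haveI hcyc : IsCyclotomicExtension {(bp : ℕ)} ℚ F := by
    have H := IntermediateField.adjoin_simple_toSubalgebra_of_isAlgebraic hint.isAlgebraic
    refine IsCyclotomicExtension.equiv _ _ _ (h := ?_) (.refl : F.toSubalgebra ≃ₐ[ℚ] _)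
    rw [H]
    exact (show IsPrimitiveRoot (xi b) (bp : ℕ) from hζ).adjoin_isCyclotomicExtension ℚ
  haveI : IsGalois ℚ F := IsCyclotomicExtension.isGalois {(bp : ℕ)} ℚ F
  haveI : FiniteDimensional ℚ F := IntermediateField.adjoin.finiteDimensional hint
  have hfft : IntermediateField.fixedField (⊤ : Subgroup (F ≃ₐ[ℚ] F)) = ⊥ := by
    have h := IsGalois.tfae (F := ℚ) (E := F)
    exact (h.out 0 1).mp ‹_›
  -- the sum as an element of F
  set T : ℕ → F := fun k => ζK ^ (k * n) / ∏ i, (1 - ζK ^ (k * a i)) with hT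
  set S : F := (b : F)⁻¹ * ∑ k ∈ Finset.Ico 1 b, T k with hS
  -- membership preservation under multiplication by a unit mod b
  have hmem : ∀ i : ℕ, Nat.Coprime i b → ∀ k ∈ Finset.Ico 1 b, (i * k) % b ∈ Finset.Ico 1 b := by
    intro i hi k hk
    simp only [Finset.mem_Ico] at *
    refine ⟨?_, Nat.mod_lt _ (by omega)⟩
    rcases Nat.eq_zero_or_pos ((i * k) % b) with h | h
    · exfalso
      have hdvd : b ∣ k * i := by
        rw [mul_comm]; exact Nat.dvd_of_mod_eq_zero h
      have hbk : b ∣ k := (Nat.Coprime.symm hi).dvd_of_dvd_mul_right hdvd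
      have := Nat.le_of_dvd (by omega) hbk
      omega
    · omega
  have hinv : ∀ i i' : ℕ, (i' * i) % b = 1 % b → ∀ k ∈ Finset.Ico 1 b,
      (i' * ((i * k) % b)) % b = k := by
    intro i i' hii k hk
    simp only [Finset.mem_Ico] at hk
    have h1 : i' * ((i * k) % b) ≡ i' * (i * k) [MOD b] :=
      (Nat.mod_modEq (i * k) b).mul_left i'
    have h2 : i' * (i * k) ≡ k [MOD b] := by
      calc i' * (i * k) = i' * i * k := by ring
        _ ≡ 1 * k [MOD b] := Nat.ModEq.mul_right k hii
        _ = k := one_mul k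
    have h3 := h1.trans h2
    unfold Nat.ModEq at h3
    rwa [Nat.mod_eq_of_lt hk.2] at h3
  -- S is fixed by every automorphism
  have hfix : ∀ σ : F ≃ₐ[ℚ] F, σ S = S := by
    intro σ
    set u : (ZMod b)ˣ := hζK.autToPow ℚ σ with hu
    set j : ℕ := ((u : ZMod b)).val with hj
    set j' : ℕ := (((u⁻¹ : (ZMod b)ˣ) : ZMod b)).val with hj'
    have hσζ : σ ζK = ζK ^ j := (hζK.autToPow_spec ℚ σ).symm
    have hjc : Nat.Coprime j b := ZMod.val_coe_unit_coprime u
    have hjc' : Nat.Coprime j' b := ZMod.val_coe_unit_coprime u⁻¹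
    have hcast : ∀ v w : (ZMod b)ˣ, v * w = 1 →
        ((v : ZMod b).val * (w : ZMod b).val) % b = 1 % b := by
      intro v w hvw
      have : (((v : ZMod b).val * (w : ZMod b).val : ℕ) : ZMod b) = ((1 : ℕ) : ZMod b) := by
        push_cast
        rw [ZMod.natCast_val, ZMod.natCast_val, ZMod.cast_id, ZMod.cast_id]
        rw [← Units.val_mul, hvw]
        simp
      rwa [ZMod.natCast_eq_natCast_iff, Nat.ModEq] at this
    have hj'j : (j' * j) % b = 1 % b := hcast u⁻¹ u (inv_mul_cancel u)
    have hjj' : (j * j') % b = 1 % b := hcast u u⁻¹ (mul_inv_cancel u)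
    have hpow : ∀ k m : ℕ, ζK ^ (j * (k * m)) = ζK ^ ((j * k) % b * m) := by
      intro k m
      rw [pow_eq_pow_mod _ hζK.pow_eq_one, pow_eq_pow_mod ((j * k) % b * m) hζK.pow_eq_one]
      congr 1
      rw [← mul_assoc]
      exact ((Nat.mod_modEq (j * k) b).mul_right m).symm
    have hterm : ∀ k : ℕ, σ (T k) = T ((j * k) % b) := by
      intro k
      simp only [hT, map_div₀, map_pow, map_prod, map_sub, map_one, hσζ, ← pow_mul, hpow]
    have hsum : ∑ k ∈ Finset.Ico 1 b, σ (T k) = ∑ k ∈ Finset.Ico 1 b, T k := by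
      rw [show (fun k => σ (T k)) = fun k => T ((j * k) % b) from funext hterm]
      refine Finset.sum_nbij' (fun k => (j * k) % b) (fun k => (j' * k) % b)
        (hmem j hjc) (hmem j' hjc') ?_ ?_ ?_
      · intro k hk; exact hinv j j' hj'j k hk
      · intro k hk; exact hinv j' j hjj' k hk
      · intro k _; rfl
    rw [hS, map_mul, map_inv₀, map_natCast, map_sum]
    rw [hsum]
  -- hence S is rational
  have hSfix : S ∈ IntermediateField.fixedField (⊤ : Subgroup (F ≃ₐ[ℚ] F)) := fun g => hfix g
  rw [hfft, IntermediateField.mem_bot] at hSfix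
  obtain ⟨q, hq⟩ := hSfix
  refine ⟨q, ?_⟩
  have hvS : F.val S = (1 / b : ℂ) * ∑ k ∈ Finset.Ico 1 b,
      xi b ^ (k * n) / ∏ i, (1 - xi b ^ (k * a i)) := by
    rw [one_div]
    simp only [hS, hT, map_mul, map_inv₀, map_natCast, map_sum, map_div₀, map_pow, map_prod,
      map_sub, map_one]
    rfl
  have hqc := congrArg F.val hq
  rw [show F.val ((algebraMap ℚ F) q) = algebraMap ℚ ℂ q from F.val.commutes q] at hqc
  rw [← hvS, ← hqc]
  exact eq_ratCast (algebraMap ℚ ℂ) q
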